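/- Let Z₁ = ∂₃ + z₁∂₄ + z₂∂₅ - z₁z₃∂₆ - z₂z₃∂₇ - (1/2)z₁z₃²∂₈ + (1/6)z₃³(b·z₂ - c·z₁)∂₉, Z₂ = ∂₁, Z₃ = ∂₂ be vector fields on ℝ⁹ with coordinates z₁,...,z₉ (∂ᵢ denoting ∂/∂zᵢ), for real constants b, c. Then any iterated Lie bracket of length ≥ 2 in the fields Z₁, Z₂, Z₃ has vanishing components in the directions ∂₁, ∂₂, ∂₃ and its remaining component functions depend only on z₁, z₂, z₃; consequently the Lie bracket of any two such iterated brackets (each of length ≥ 2) vanishes identically. -/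

import Mathlib

/-- The space ℝ⁹ with coordinates z₁, …, z₉ (index `i : Fin 9` is zᵢ₊₁). -/
abbrev E9 := Fin 9 → ℝ

/-- Lie bracket of vector fields on ℝ⁹, viewed as ℝ⁹-valued functions:
`[X,Y](v) = DY(v)(X(v)) - DX(v)(Y(v))`. -/
noncomputable def lieB (X Y : E9 → E9) : E9 → E9 :=
  fun v => fderiv ℝ Y v (X v) - fderiv ℝ X v (Y v)

/-- `Z₁ = ∂₃ + z₁∂₄ + z₂∂₅ - z₁z₃∂₆ - z₂z₃∂₇ - ½ z₁z₃²∂₈ + ⅙ z₃³(b z₂ - c z₁)∂₉`. -/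
noncomputable def Zone (b c : ℝ) : E9 → E9 := fun v =>
  ![0, 0, 1, v 0, v 1, -(v 0 * v 2), -(v 1 * v 2), -(1/2 * (v 0 * v 2 ^ 2)),
    1/6 * v 2 ^ 3 * (b * v 1 - c * v 0)]

/-- `Z₂ = ∂₁`. -/
noncomputable def Ztwo : E9 → E9 := fun _ => Pi.single 0 1

/-- `Z₃ = ∂₂`. -/
noncomputable def Zthree : E9 → E9 := fun _ => Pi.single 1 1

/-- Formal iterated bracket expressions in the generators Z₁, Z₂, Z₃. -/
inductive Bkt where
  | z1 : Bkt
  | z2 : Bkt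
  | z3 : Bkt
  | br : Bkt → Bkt → Bkt

/-- The length (number of generator occurrences) of a bracket expression. -/
def Bkt.leaves : Bkt → ℕ
  | .z1 => 1
  | .z2 => 1
  | .z3 => 1
  | .br a b => a.leaves + b.leaves

/-- Evaluation of a formal bracket expression as a vector field on ℝ⁹. -/
noncomputable def Bkt.eval (b c : ℝ) : Bkt → (E9 → E9)
  | .z1 => Zone b c
  | .z2 => Ztwo
  | .z3 => Zthree
  | .br a b' => lieB (a.eval b c) (b'.eval b c)

/-! ### Auxiliary machinery -/

@[simp] lemma vec9_mk_0 {α : Type*} (a0 a1 a2 a3 a4 a5 a6 a7 a8 : α) (h : 0 < 9) :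
    (![a0,a1,a2,a3,a4,a5,a6,a7,a8] : Fin 9 → α) ⟨0, h⟩ = a0 := rfl
@[simp] lemma vec9_lit_0 {α : Type*} (a0 a1 a2 a3 a4 a5 a6 a7 a8 : α) :
    (![a0,a1,a2,a3,a4,a5,a6,a7,a8] : Fin 9 → α) (0 : Fin 9) = a0 := rfl
@[simp] lemma vec9_mk_1 {α : Type*} (a0 a1 a2 a3 a4 a5 a6 a7 a8 : α) (h : 1 < 9) :
    (![a0,a1,a2,a3,a4,a5,a6,a7,a8] : Fin 9 → α) ⟨1, h⟩ = a1 := rfl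
@[simp] lemma vec9_lit_1 {α : Type*} (a0 a1 a2 a3 a4 a5 a6 a7 a8 : α) :
    (![a0,a1,a2,a3,a4,a5,a6,a7,a8] : Fin 9 → α) (1 : Fin 9) = a1 := rfl
@[simp] lemma vec9_mk_2 {α : Type*} (a0 a1 a2 a3 a4 a5 a6 a7 a8 : α) (h : 2 < 9) :
    (![a0,a1,a2,a3,a4,a5,a6,a7,a8] : Fin 9 → α) ⟨2, h⟩ = a2 := rfl
@[simp] lemma vec9_lit_2 {α : Type*} (a0 a1 a2 a3 a4 a5 a6 a7 a8 : α) :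
    (![a0,a1,a2,a3,a4,a5,a6,a7,a8] : Fin 9 → α) (2 : Fin 9) = a2 := rfl
@[simp] lemma vec9_mk_3 {α : Type*} (a0 a1 a2 a3 a4 a5 a6 a7 a8 : α) (h : 3 < 9) :
    (![a0,a1,a2,a3,a4,a5,a6,a7,a8] : Fin 9 → α) ⟨3, h⟩ = a3 := rfl
@[simp] lemma vec9_lit_3 {α : Type*} (a0 a1 a2 a3 a4 a5 a6 a7 a8 : α) :
    (![a0,a1,a2,a3,a4,a5,a6,a7,a8] : Fin 9 → α) (3 : Fin 9) = a3 := rfl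
@[simp] lemma vec9_mk_4 {α : Type*} (a0 a1 a2 a3 a4 a5 a6 a7 a8 : α) (h : 4 < 9) :
    (![a0,a1,a2,a3,a4,a5,a6,a7,a8] : Fin 9 → α) ⟨4, h⟩ = a4 := rfl
@[simp] lemma vec9_lit_4 {α : Type*} (a0 a1 a2 a3 a4 a5 a6 a7 a8 : α) :
    (![a0,a1,a2,a3,a4,a5,a6,a7,a8] : Fin 9 → α) (4 : Fin 9) = a4 := rfl
@[simp] lemma vec9_mk_5 {α : Type*} (a0 a1 a2 a3 a4 a5 a6 a7 a8 : α) (h : 5 < 9) :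
    (![a0,a1,a2,a3,a4,a5,a6,a7,a8] : Fin 9 → α) ⟨5, h⟩ = a5 := rfl
@[simp] lemma vec9_lit_5 {α : Type*} (a0 a1 a2 a3 a4 a5 a6 a7 a8 : α) :
    (![a0,a1,a2,a3,a4,a5,a6,a7,a8] : Fin 9 → α) (5 : Fin 9) = a5 := rfl
@[simp] lemma vec9_mk_6 {α : Type*} (a0 a1 a2 a3 a4 a5 a6 a7 a8 : α) (h : 6 < 9) :
    (![a0,a1,a2,a3,a4,a5,a6,a7,a8] : Fin 9 → α) ⟨6, h⟩ = a6 := rfl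
@[simp] lemma vec9_lit_6 {α : Type*} (a0 a1 a2 a3 a4 a5 a6 a7 a8 : α) :
    (![a0,a1,a2,a3,a4,a5,a6,a7,a8] : Fin 9 → α) (6 : Fin 9) = a6 := rfl
@[simp] lemma vec9_mk_7 {α : Type*} (a0 a1 a2 a3 a4 a5 a6 a7 a8 : α) (h : 7 < 9) :
    (![a0,a1,a2,a3,a4,a5,a6,a7,a8] : Fin 9 → α) ⟨7, h⟩ = a7 := rfl
@[simp] lemma vec9_lit_7 {α : Type*} (a0 a1 a2 a3 a4 a5 a6 a7 a8 : α) :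
    (![a0,a1,a2,a3,a4,a5,a6,a7,a8] : Fin 9 → α) (7 : Fin 9) = a7 := rfl
@[simp] lemma vec9_mk_8 {α : Type*} (a0 a1 a2 a3 a4 a5 a6 a7 a8 : α) (h : 8 < 9) :
    (![a0,a1,a2,a3,a4,a5,a6,a7,a8] : Fin 9 → α) ⟨8, h⟩ = a8 := rfl
@[simp] lemma vec9_lit_8 {α : Type*} (a0 a1 a2 a3 a4 a5 a6 a7 a8 : α) :
    (![a0,a1,a2,a3,a4,a5,a6,a7,a8] : Fin 9 → α) (8 : Fin 9) = a8 := rfl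


noncomputable def pr (i : Fin 9) : E9 →L[ℝ] ℝ :=
  ContinuousLinearMap.proj i

/-- The total derivative of `Zone b c` at `v`. -/
noncomputable def LZ (b c : ℝ) (v : E9) : E9 →L[ℝ] E9 :=
  ContinuousLinearMap.pi
    ![0, 0, 0, pr 0, pr 1,
      -(v 0 • pr 2 + v 2 • pr 0),
      -(v 1 • pr 2 + v 2 • pr 1),
      -((1/2 : ℝ) • (v 0 • (v 2 • pr 2 + v 2 • pr 2) + (v 2 * v 2) • pr 0)),
      ((1/6) * (v 2 * (v 2 * v 2))) • (b • pr 1 - c • pr 0) +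
        (b * v 1 - c * v 0) • ((1/6 : ℝ) •
          (v 2 • (v 2 • pr 2 + v 2 • pr 2) + (v 2 * v 2) • pr 2))]

lemma hasFDerivAt_Zone (b c : ℝ) (v : E9) : HasFDerivAt (Zone b c) (LZ b c v) v := by
  have h0 : HasFDerivAt (fun w : E9 => w 0) (pr 0) v := hasFDerivAt_apply 0 v
  have h1 : HasFDerivAt (fun w : E9 => w 1) (pr 1) v := hasFDerivAt_apply 1 v
  have h2 : HasFDerivAt (fun w : E9 => w 2) (pr 2) v := hasFDerivAt_apply 2 v
  apply hasFDerivAt_pi''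
  intro i
  fin_cases i <;>
    simp only [Zone, LZ, ContinuousLinearMap.proj_pi, vec9_mk_0, vec9_mk_1, vec9_mk_2,
      vec9_mk_3, vec9_mk_4, vec9_mk_5, vec9_mk_6, vec9_mk_7, vec9_mk_8,
      vec9_lit_0, vec9_lit_1, vec9_lit_2, vec9_lit_3, vec9_lit_4, vec9_lit_5,
      vec9_lit_6, vec9_lit_7, vec9_lit_8]
  · exact hasFDerivAt_const 0 v
  · exact hasFDerivAt_const 0 v
  · exact hasFDerivAt_const 1 v
  · exact h0
  · exact h1
  · convert (h0.mul h2).neg using 1 <;>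
      ext w <;> simp [pr] <;> ring
  · convert (h1.mul h2).neg using 1 <;>
      ext w <;> simp [pr] <;> ring
  · have he : (fun x : E9 => -(1/2 * (x 0 * x 2 ^ 2)))
        = fun x : E9 => -(1/2 * (x 0 * (x 2 * x 2))) := by funext x; ring
    rw [he]
    convert ((h0.mul (h2.mul h2)).const_mul (1/2)).neg using 1 <;>
      ext w <;> simp [pr] <;> ring
  · have he : (fun x : E9 => 1/6 * x 2 ^ 3 * (b * x 1 - c * x 0))
        = fun x : E9 => (1/6 * (x 2 * (x 2 * x 2))) * (b * x 1 - c * x 0) := by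
      funext x; ring
    rw [he]
    convert ((h2.mul (h2.mul h2)).const_mul (1/6)).mul
      ((h1.const_mul b).sub (h0.const_mul c)) using 1 <;>
      ext w <;> simp [pr] <;> ring

lemma fderiv_Zone_apply (b c : ℝ) (v h : E9) :
    fderiv ℝ (Zone b c) v h = ![0, 0, 0, h 0, h 1,
      -(h 0 * v 2 + v 0 * h 2), -(h 1 * v 2 + v 1 * h 2),
      -(1/2 * (h 0 * v 2 ^ 2) + v 0 * v 2 * h 2),
      1/6 * v 2 ^ 3 * (b * h 1 - c * h 0)
        + 1/2 * v 2 ^ 2 * h 2 * (b * v 1 - c * v 0)] := by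
  rw [(hasFDerivAt_Zone b c v).fderiv]
  funext i
  fin_cases i <;>
    simp [LZ, pr, ContinuousLinearMap.pi_apply] <;> ring

lemma fderiv_Zone_ker (b c : ℝ) (v h : E9)
    (h0 : h 0 = 0) (h1 : h 1 = 0) (h2 : h 2 = 0) :
    fderiv ℝ (Zone b c) v h = 0 := by
  rw [fderiv_Zone_apply]
  funext i
  fin_cases i <;> simp [h0, h1, h2]

/-- The invariant class: fields depending only on `z₃` with vanishing
first three components. -/
def Nice (X : E9 → E9) : Prop :=
  ∃ G : ℝ → E9, ContDiff ℝ (⊤ : ℕ∞) G ∧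
    (∀ t, G t 0 = 0 ∧ G t 1 = 0 ∧ G t 2 = 0) ∧ ∀ v, X v = G (v 2)

lemma nice_hasFDerivAt {G : ℝ → E9} (hG : ContDiff ℝ (⊤ : ℕ∞) G) (v : E9) :
    HasFDerivAt (fun w : E9 => G (w 2)) ((fderiv ℝ G (v 2)).comp (pr 2)) v :=
  ((hG.differentiable (by simp) (v 2)).hasFDerivAt).comp v (hasFDerivAt_apply 2 v)

lemma nice_fderiv {X : E9 → E9} {G : ℝ → E9} (hG : ContDiff ℝ (⊤ : ℕ∞) G)
    (hX : ∀ v, X v = G (v 2)) (v h : E9) :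
    fderiv ℝ X v h = fderiv ℝ G (v 2) (h 2) := by
  have hXe : X = fun w : E9 => G (w 2) := funext hX
  rw [hXe, (nice_hasFDerivAt hG v).fderiv]
  rfl

lemma deriv_comp_zero {G : ℝ → E9} (hG : ContDiff ℝ (⊤ : ℕ∞) G)
    (hz : ∀ t, G t 0 = 0 ∧ G t 1 = 0 ∧ G t 2 = 0) (t : ℝ) :
    deriv G t 0 = 0 ∧ deriv G t 1 = 0 ∧ deriv G t 2 = 0 := by
  have hdiff : ∀ i : Fin 9, DifferentiableAt ℝ (fun s => G s i) t := fun i =>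
    differentiableAt_pi.mp (hG.differentiable (by simp) t) i
  rw [deriv_pi hdiff]
  refine ⟨?_, ?_, ?_⟩
  · show deriv (fun s => G s 0) t = 0
    have : (fun s => G s 0) = fun _ => 0 := funext fun s => (hz s).1
    rw [this, deriv_const]
  · show deriv (fun s => G s 1) t = 0
    have : (fun s => G s 1) = fun _ => 0 := funext fun s => (hz s).2.1
    rw [this, deriv_const]
  · show deriv (fun s => G s 2) t = 0
    have : (fun s => G s 2) = fun _ => 0 := funext fun s => (hz s).2.2
    rw [this, deriv_const]

lemma nice_of_eq_zero {X : E9 → E9} (h : ∀ v, X v = 0) : Nice X :=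
  ⟨fun _ => 0, contDiff_const, fun _ => ⟨rfl, rfl, rfl⟩, fun v => by simp [h v]⟩

lemma Zone_apply2 (b c : ℝ) (v : E9) : Zone b c v 2 = 1 := by simp [Zone]

/-- Bracket of two nice fields vanishes. -/
lemma lieB_nice_nice {X Y : E9 → E9} (hX : Nice X) (hY : Nice Y) :
    ∀ v, lieB X Y v = 0 := by
  obtain ⟨G, hG, hGz, hGX⟩ := hX
  obtain ⟨H, hH, hHz, hHY⟩ := hY
  intro v
  have h1 : fderiv ℝ Y v (X v) = 0 := by
    rw [nice_fderiv hH hHY v (X v), hGX v, (hGz (v 2)).2.2, map_zero]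
  have h2 : fderiv ℝ X v (Y v) = 0 := by
    rw [nice_fderiv hG hGX v (Y v), hHY v, (hHz (v 2)).2.2, map_zero]
  simp [lieB, h1, h2]

lemma nice_deriv {G : ℝ → E9} (hG : ContDiff ℝ (⊤ : ℕ∞) G)
    (hz : ∀ t, G t 0 = 0 ∧ G t 1 = 0 ∧ G t 2 = 0) :
    ContDiff ℝ (⊤ : ℕ∞) (deriv G) ∧
      (∀ t, deriv G t 0 = 0 ∧ deriv G t 1 = 0 ∧ deriv G t 2 = 0) :=
  ⟨(contDiff_infty_iff_deriv.mp hG).2, fun t => deriv_comp_zero hG hz t⟩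

/-- `[Z₁, X]` for nice `X`. -/
lemma lieB_Zone_nice (b c : ℝ) {X : E9 → E9} (hX : Nice X) :
    Nice (lieB (Zone b c) X) := by
  obtain ⟨G, hG, hGz, hGX⟩ := hX
  obtain ⟨hd, hdz⟩ := nice_deriv hG hGz
  refine ⟨deriv G, hd, hdz, fun v => ?_⟩
  have h1 : fderiv ℝ X v (Zone b c v) = deriv G (v 2) := by
    rw [nice_fderiv hG hGX v (Zone b c v), Zone_apply2, fderiv_apply_one_eq_deriv]
  have h2 : fderiv ℝ (Zone b c) v (X v) = 0 := by
    refine fderiv_Zone_ker b c v (X v) ?_ ?_ ?_ <;>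
      rw [hGX v]
    exacts [(hGz (v 2)).1, (hGz (v 2)).2.1, (hGz (v 2)).2.2]
  simp [lieB, h1, h2]

/-- `[X, Z₁]` for nice `X`. -/
lemma lieB_nice_Zone (b c : ℝ) {X : E9 → E9} (hX : Nice X) :
    Nice (lieB X (Zone b c)) := by
  obtain ⟨G, hG, hGz, hGX⟩ := hX
  obtain ⟨hd, hdz⟩ := nice_deriv hG hGz
  refine ⟨fun t => -(deriv G t), hd.neg, fun t => by
    simpa using ⟨(hdz t).1, (hdz t).2.1, (hdz t).2.2⟩, fun v => ?_⟩
  have h1 : fderiv ℝ (Zone b c) v (X v) = 0 := by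
    refine fderiv_Zone_ker b c v (X v) ?_ ?_ ?_ <;> rw [hGX v]
    exacts [(hGz (v 2)).1, (hGz (v 2)).2.1, (hGz (v 2)).2.2]
  have h2 : fderiv ℝ X v (Zone b c v) = deriv G (v 2) := by
    rw [nice_fderiv hG hGX v (Zone b c v), Zone_apply2, fderiv_apply_one_eq_deriv]
  simp [lieB, h1, h2]

lemma fderiv_Ztwo (v : E9) : fderiv ℝ Ztwo v = 0 :=
  fderiv_const_apply _

lemma fderiv_Zthree (v : E9) : fderiv ℝ Zthree v = 0 :=
  fderiv_const_apply _

lemma lieB_nice_Ztwo {X : E9 → E9} (hX : Nice X) : ∀ v, lieB X Ztwo v = 0 := by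
  obtain ⟨G, hG, hGz, hGX⟩ := hX
  intro v
  have h1 : fderiv ℝ X v (Ztwo v) = 0 := by
    rw [nice_fderiv hG hGX v (Ztwo v)]
    have : Ztwo v 2 = 0 := by simp [Ztwo, Pi.single_apply]
    rw [this, map_zero]
  simp [lieB, fderiv_Ztwo, h1]

lemma lieB_Ztwo_nice {X : E9 → E9} (hX : Nice X) : ∀ v, lieB Ztwo X v = 0 := by
  obtain ⟨G, hG, hGz, hGX⟩ := hX
  intro v
  have h1 : fderiv ℝ X v (Ztwo v) = 0 := by
    rw [nice_fderiv hG hGX v (Ztwo v)]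
    have : Ztwo v 2 = 0 := by simp [Ztwo, Pi.single_apply]
    rw [this, map_zero]
  simp [lieB, fderiv_Ztwo, h1]

lemma lieB_nice_Zthree {X : E9 → E9} (hX : Nice X) : ∀ v, lieB X Zthree v = 0 := by
  obtain ⟨G, hG, hGz, hGX⟩ := hX
  intro v
  have h1 : fderiv ℝ X v (Zthree v) = 0 := by
    rw [nice_fderiv hG hGX v (Zthree v)]
    have : Zthree v 2 = 0 := by simp [Zthree, Pi.single_apply]
    rw [this, map_zero]
  simp [lieB, fderiv_Zthree, h1]

lemma lieB_Zthree_nice {X : E9 → E9} (hX : Nice X) : ∀ v, lieB Zthree X v = 0 := by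
  obtain ⟨G, hG, hGz, hGX⟩ := hX
  intro v
  have h1 : fderiv ℝ X v (Zthree v) = 0 := by
    rw [nice_fderiv hG hGX v (Zthree v)]
    have : Zthree v 2 = 0 := by simp [Zthree, Pi.single_apply]
    rw [this, map_zero]
  simp [lieB, fderiv_Zthree, h1]

/-! ### Base brackets among the generators -/

noncomputable def GA (c : ℝ) : ℝ → E9 :=
  fun t => ![0, 0, 0, -1, 0, t, 0, 1/2 * t ^ 2, c/6 * t ^ 3]

noncomputable def GB (b : ℝ) : ℝ → E9 :=
  fun t => ![0, 0, 0, 0, -1, 0, t, 0, -(b/6 * t ^ 3)]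

lemma contDiff_GA (c : ℝ) : ContDiff ℝ (⊤ : ℕ∞) (GA c) := by
  rw [contDiff_pi]
  intro i
  fin_cases i <;> simp [GA] <;> fun_prop

lemma contDiff_GB (b : ℝ) : ContDiff ℝ (⊤ : ℕ∞) (GB b) := by
  rw [contDiff_pi]
  intro i
  fin_cases i <;> simp [GB] <;> fun_prop

lemma GA_zero (c : ℝ) (t : ℝ) : GA c t 0 = 0 ∧ GA c t 1 = 0 ∧ GA c t 2 = 0 := by
  refine ⟨?_, ?_, ?_⟩ <;> simp [GA]

lemma GB_zero (b : ℝ) (t : ℝ) : GB b t 0 = 0 ∧ GB b t 1 = 0 ∧ GB b t 2 = 0 := by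
  refine ⟨?_, ?_, ?_⟩ <;> simp [GB]

lemma lieB_Zone_Ztwo (b c : ℝ) (v : E9) : lieB (Zone b c) Ztwo v = GA c (v 2) := by
  have h1 : fderiv ℝ Ztwo v (Zone b c v) = 0 := by simp [fderiv_Ztwo]
  have h2 : fderiv ℝ (Zone b c) v (Ztwo v) =
      ![0, 0, 0, 1, 0, -(v 2), 0, -(1/2 * v 2 ^ 2), -(c/6 * v 2 ^ 3)] := by
    rw [show Ztwo v = Pi.single 0 1 from rfl, fderiv_Zone_apply]
    funext i
    fin_cases i <;> simp [Pi.single_apply] <;> ring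
  simp only [lieB, h1, h2]
  funext i
  fin_cases i <;> simp [GA] <;> ring

lemma lieB_Zone_Zthree (b c : ℝ) (v : E9) : lieB (Zone b c) Zthree v = GB b (v 2) := by
  have h1 : fderiv ℝ Zthree v (Zone b c v) = 0 := by simp [fderiv_Zthree]
  have h2 : fderiv ℝ (Zone b c) v (Zthree v) =
      ![0, 0, 0, 0, 1, 0, -(v 2), 0, b/6 * v 2 ^ 3] := by
    rw [show Zthree v = Pi.single 1 1 from rfl, fderiv_Zone_apply]
    funext i
    fin_cases i <;> simp [Pi.single_apply] <;> ring
  simp only [lieB, h1, h2]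
  funext i
  fin_cases i <;> simp [GB] <;> ring

lemma lieB_swap (X Y : E9 → E9) (v : E9) : lieB Y X v = -(lieB X Y v) := by
  simp [lieB]

lemma nice_neg {X : E9 → E9} (hX : Nice X) : Nice (fun v => -(X v)) := by
  obtain ⟨G, hG, hGz, hGX⟩ := hX
  exact ⟨fun t => -(G t), hG.neg,
    fun t => by simpa using ⟨(hGz t).1, (hGz t).2.1, (hGz t).2.2⟩,
    fun v => by show -(X v) = -(G (v 2)); rw [hGX v]⟩

lemma nice_Zone_Ztwo (b c : ℝ) : Nice (lieB (Zone b c) Ztwo) :=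
  ⟨GA c, contDiff_GA c, GA_zero c, fun v => lieB_Zone_Ztwo b c v⟩

lemma nice_Zone_Zthree (b c : ℝ) : Nice (lieB (Zone b c) Zthree) :=
  ⟨GB b, contDiff_GB b, GB_zero b, fun v => lieB_Zone_Zthree b c v⟩

lemma nice_Ztwo_Zone (b c : ℝ) : Nice (lieB Ztwo (Zone b c)) := by
  have : lieB Ztwo (Zone b c) = fun v => -(lieB (Zone b c) Ztwo v) :=
    funext fun v => lieB_swap (Zone b c) Ztwo v
  rw [this]
  exact nice_neg (nice_Zone_Ztwo b c)

lemma nice_Zthree_Zone (b c : ℝ) : Nice (lieB Zthree (Zone b c)) := by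
  have : lieB Zthree (Zone b c) = fun v => -(lieB (Zone b c) Zthree v) :=
    funext fun v => lieB_swap (Zone b c) Zthree v
  rw [this]
  exact nice_neg (nice_Zone_Zthree b c)

lemma lieB_self (X : E9 → E9) (v : E9) : lieB X X v = 0 := sub_self _

lemma lieB_const_const (a₁ a₂ : E9) (v : E9) :
    lieB (fun _ => a₁) (fun _ => a₂) v = 0 := by
  simp [lieB, fderiv_const]

lemma one_le_leaves (e : Bkt) : 1 ≤ e.leaves := by
  induction e <;> simp [Bkt.leaves] <;> omega

lemma two_le_leaves_br (x y : Bkt) : 2 ≤ (Bkt.br x y).leaves := by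
  have := one_le_leaves x
  have := one_le_leaves y
  simp [Bkt.leaves]
  omega

lemma nice_eval (b c : ℝ) : ∀ e : Bkt, 2 ≤ e.leaves → Nice (Bkt.eval b c e) := by
  intro e
  induction e with
  | z1 => intro h; simp [Bkt.leaves] at h
  | z2 => intro h; simp [Bkt.leaves] at h
  | z3 => intro h; simp [Bkt.leaves] at h
  | br a a' iha ihb =>
    intro _
    show Nice (lieB (Bkt.eval b c a) (Bkt.eval b c a'))
    cases a with
    | z1 =>
      cases a' with
      | z1 => exact nice_of_eq_zero (lieB_self _)
      | z2 => exact nice_Zone_Ztwo b c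
      | z3 => exact nice_Zone_Zthree b c
      | br x y => exact lieB_Zone_nice b c (ihb (two_le_leaves_br x y))
    | z2 =>
      cases a' with
      | z1 => exact nice_Ztwo_Zone b c
      | z2 => exact nice_of_eq_zero (lieB_self _)
      | z3 => exact nice_of_eq_zero (lieB_const_const _ _)
      | br x y => exact nice_of_eq_zero (lieB_Ztwo_nice (ihb (two_le_leaves_br x y)))
    | z3 =>
      cases a' with
      | z1 => exact nice_Zthree_Zone b c
      | z2 => exact nice_of_eq_zero (lieB_const_const _ _)
      | z3 => exact nice_of_eq_zero (lieB_self _)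
      | br x y => exact nice_of_eq_zero (lieB_Zthree_nice (ihb (two_le_leaves_br x y)))
    | br x y =>
      have hx := iha (two_le_leaves_br x y)
      cases a' with
      | z1 => exact lieB_nice_Zone b c hx
      | z2 => exact nice_of_eq_zero (lieB_nice_Ztwo hx)
      | z3 => exact nice_of_eq_zero (lieB_nice_Zthree hx)
      | br x' y' => exact nice_of_eq_zero (lieB_nice_nice hx (ihb (two_le_leaves_br x' y')))

/-- Any iterated Lie bracket of length ≥ 2 in Z₁, Z₂, Z₃ has vanishing components
in the directions ∂₁, ∂₂, ∂₃, and its remaining components depend only on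
z₁, z₂, z₃; consequently the bracket of any two such iterated brackets vanishes
identically. -/
theorem iterated_brackets_structure (b c : ℝ) :
    (∀ e : Bkt, 2 ≤ e.leaves →
      (∀ v : E9, ∀ i : Fin 9, (i : ℕ) < 3 → Bkt.eval b c e v i = 0) ∧
      (∀ v w : E9, v 0 = w 0 → v 1 = w 1 → v 2 = w 2 →
        Bkt.eval b c e v = Bkt.eval b c e w)) ∧
    (∀ e₁ e₂ : Bkt, 2 ≤ e₁.leaves → 2 ≤ e₂.leaves →
      lieB (Bkt.eval b c e₁) (Bkt.eval b c e₂) = fun _ => 0) := by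
  constructor
  · intro e he
    obtain ⟨G, hG, hGz, hGX⟩ := nice_eval b c e he
    constructor
    · intro v i hi
      rw [hGX v]
      fin_cases i
      · exact (hGz (v 2)).1
      · exact (hGz (v 2)).2.1
      · exact (hGz (v 2)).2.2
      all_goals simp at hi
    · intro v w _ _ h2
      rw [hGX v, hGX w, h2]
  · intro e₁ e₂ h₁ h₂
    exact funext (lieB_nice_nice (nice_eval b c e₁ h₁) (nice_eval b c e₂ h₂))
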